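/- Let ρ be a fully separable density operator on (ℂ^d)^{⊗n}, let {B_k^(l)}_{k=1}^N be any choice of N MUBs on each subsystem l ∈ {1,…,n}, and let f be an entropic-uncertainty bound for N MUBs in dimension d. Then for every subsystem l, ∑_{k=1}^N I(B_k^(l) : B_k^(l̄) | ρ) ≤ N·log₂ d − f. -/

import Mathlib

open scoped BigOperators ComplexOrder

namespace Paper

noncomputable section

/-- Base-2 Shannon entropy of a finitely indexed probability vector. -/
def shannon {α : Type*} [Fintype α] (p : α → ℝ) : ℝ :=
  ∑ a, -(p a * Real.logb 2 (p a))

/-- Joint outcome type for `n` subsystems of local dimension `d`. -/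
abbrev Idx (n d : ℕ) := Fin n → Fin d

/-- The projector `|ψ⟩⟨ψ|`. -/
def proj {α : Type*} (ψ : α → ℂ) : Matrix α α ℂ :=
  Matrix.of fun x y => ψ x * (starRingEnd ℂ) (ψ y)

/-- A density operator: positive semidefinite with trace one. -/
def IsDensityOp {α : Type*} [Fintype α] [DecidableEq α] (ρ : Matrix α α ℂ) : Prop :=
  ρ.PosSemidef ∧ ρ.trace = 1

/-- `B` is an orthonormal basis of `ℂ^d` (`B i` is the `i`-th basis vector). -/
def IsONB {d : ℕ} (B : Fin d → Fin d → ℂ) : Prop :=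
  ∀ i j, (∑ x, (starRingEnd ℂ) (B i x) * B j x) = if i = j then 1 else 0

/-- Two bases of `ℂ^d` are mutually unbiased. -/
def MutUnbiased {d : ℕ} (B B' : Fin d → Fin d → ℂ) : Prop :=
  ∀ i j, ‖∑ x, (starRingEnd ℂ) (B i x) * B' j x‖ ^ 2 = 1 / d

/-- Joint outcome distribution of measuring the orthonormal basis `B l` on each factor `l`. -/
def jointProb {n d : ℕ} (ρ : Matrix (Idx n d) (Idx n d) ℂ)
    (B : Fin n → Fin d → Fin d → ℂ) (i : Idx n d) : ℝ :=
  (∑ x : Idx n d, ∑ y : Idx n d,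
    (∏ l, (starRingEnd ℂ) (B l (i l) (x l))) * ρ x y * (∏ l, B l (i l) (y l))).re

/-- Marginal distribution of subsystem `l`. -/
def margAt {n d : ℕ} (p : Idx n d → ℝ) (l : Fin n) (i : Fin d) : ℝ :=
  ∑ x : Idx n d, if x l = i then p x else 0

/-- Insert outcome `i` at position `l` into a tuple of outcomes of the other subsystems. -/
def insertAt {n d : ℕ} (l : Fin n) (i : Fin d) (g : {m : Fin n // m ≠ l} → Fin d) : Idx n d :=
  fun m => if h : m = l then i else g ⟨m, h⟩

/-- Marginal distribution of all subsystems except `l`. -/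
def margRest {n d : ℕ} (p : Idx n d → ℝ) (l : Fin n)
    (g : {m : Fin n // m ≠ l} → Fin d) : ℝ :=
  ∑ i : Fin d, p (insertAt l i g)

/-- Mutual information `I(B⁽ˡ⁾ : B⁽ˡ̄⁾)` between the outcome at subsystem `l` and the
outcomes at the remaining subsystems, for the joint outcome distribution `p`. -/
def mutualInfo {n d : ℕ} (p : Idx n d → ℝ) (l : Fin n) : ℝ :=
  shannon (margAt p l) + shannon (margRest p l) - shannon p

/-- The correlation function `C_N(ρ, {B_k^{(l)}})`. -/
def CNval {n d : ℕ} (N : ℕ) (ρ : Matrix (Idx n d) (Idx n d) ℂ)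
    (B : Fin N → Fin n → Fin d → Fin d → ℂ) : ℝ :=
  (1 / (n * N)) * ∑ k, ∑ l, mutualInfo (jointProb ρ (B k)) l

/-- `B k l` is, for each subsystem `l`, a family of `N` pairwise mutually unbiased
orthonormal bases (indexed by `k`). -/
def ValidMUBs {n d : ℕ} (N : ℕ) (B : Fin N → Fin n → Fin d → Fin d → ℂ) : Prop :=
  (∀ k l, IsONB (B k l)) ∧ ∀ l k k', k ≠ k' → MutUnbiased (B k l) (B k' l)

/-- The set of values `C_N(ρ, ·)` over all admissible choices of MUBs;
`𝒞_N(ρ)` is the supremum of this set. -/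
def CNvalues {n d : ℕ} (N : ℕ) (ρ : Matrix (Idx n d) (Idx n d) ℂ) : Set ℝ :=
  {x | ∃ B : Fin N → Fin n → Fin d → Fin d → ℂ, ValidMUBs N B ∧ x = CNval N ρ B}

/-- Single-subsystem reduced state `tr_{l̄} ρ`. -/
def reducedAt {n d : ℕ} (ρ : Matrix (Idx n d) (Idx n d) ℂ) (l : Fin n) :
    Matrix (Fin d) (Fin d) ℂ :=
  Matrix.of fun i j =>
    ∑ g : {m : Fin n // m ≠ l} → Fin d, ρ (insertAt l i g) (insertAt l j g)

/-- `ω_d = exp(2πi/d)`. -/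
def ω (d : ℕ) : ℂ := Complex.exp (2 * Real.pi * Complex.I / d)

/-- The generalized Pauli operator `X_d`. -/
def Xmat (d : ℕ) : Matrix (Fin d) (Fin d) ℂ :=
  Matrix.of fun i j => if (i : ℕ) = ((j : ℕ) + 1) % d then 1 else 0

/-- The generalized Pauli operator `Z_d`. -/
def Zmat (d : ℕ) : Matrix (Fin d) (Fin d) ℂ :=
  Matrix.of fun i j => if i = j then ω d ^ (i : ℕ) else 0

/-- The generalized Pauli operator `S_{d,(k₁,k₂)} = X_d^{k₁} Z_d^{k₂}`. -/
def Smat (d : ℕ) (k : Fin d × Fin d) : Matrix (Fin d) (Fin d) ℂ :=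
  Xmat d ^ (k.1 : ℕ) * Zmat d ^ (k.2 : ℕ)

/-- Apply a local operator `A l` to each tensor factor of a multipartite vector `ψ`,
i.e. the vector `(⊗_l A l) ψ`. -/
def applyLocal {n d : ℕ} (A : Fin n → Matrix (Fin d) (Fin d) ℂ) (ψ : Idx n d → ℂ) :
    Idx n d → ℂ :=
  fun x => ∑ y : Idx n d, (∏ l, A l (x l) (y l)) * ψ y

/-- The computational (standard) basis of `ℂ^d`, the eigenbasis of `Z_d`. -/
def stdBasis (d : ℕ) : Fin d → Fin d → ℂ :=
  fun i x => if x = i then 1 else 0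

/-- The Fourier basis of `ℂ^d`, the eigenbasis of `X_d`. -/
def fourierBasis (d : ℕ) : Fin d → Fin d → ℂ :=
  fun i x => (((Real.sqrt d)⁻¹ : ℝ) : ℂ) * ω d ^ ((i : ℕ) * (x : ℕ))

/-- The `n`-fold tensor product `⊗_l A l` as a matrix on the joint system. -/
def tensorN {n d : ℕ} (A : Fin n → Matrix (Fin d) (Fin d) ℂ) :
    Matrix (Idx n d) (Idx n d) ℂ :=
  Matrix.of fun x y => ∏ l, A l (x l) (y l)

/-- Full separability of an `n`-partite density operator. -/
def FullySep {n d : ℕ} (ρ : Matrix (Idx n d) (Idx n d) ℂ) : Prop :=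
  ∃ (J : ℕ) (p : Fin J → ℝ) (σ : Fin J → Fin n → Matrix (Fin d) (Fin d) ℂ),
    (∀ j, 0 ≤ p j) ∧ (∑ j, p j) = 1 ∧ (∀ j l, IsDensityOp (σ j l)) ∧
    ρ = ∑ j, p j • tensorN (σ j)

/-- generalized GHZ state `(1/√d) ∑_i |i⟩^{⊗n}`. -/
def GHZvec (d n : ℕ) : Idx n d → ℂ :=
  fun x => if ∀ l l', x l = x l' then (((Real.sqrt d)⁻¹ : ℝ) : ℂ) else 0


/-- Outcome distribution of measuring the basis `B` on the single-system state `σ`. -/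
def prob1 {d : ℕ} (σ : Matrix (Fin d) (Fin d) ℂ) (B : Fin d → Fin d → ℂ) (i : Fin d) : ℝ :=
  (∑ x, ∑ y, (starRingEnd ℂ) (B i x) * σ x y * B i y).re

/-- `f` is an entropic-uncertainty bound for `N` MUBs in dimension `d`:
`∑_k H(B_k|σ) ≥ f` for every set of `N` MUBs and every density operator `σ`. -/
def EntropicBound (d N : ℕ) (f : ℝ) : Prop :=
  ∀ B : Fin N → Fin d → Fin d → ℂ, (∀ k, IsONB (B k)) →
    (∀ k k', k ≠ k' → MutUnbiased (B k) (B k')) →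
    ∀ σ : Matrix (Fin d) (Fin d) ℂ, IsDensityOp σ →
      f ≤ ∑ k, shannon (prob1 σ (B k))


section AuxLemmas
open scoped Matrix

/-! ### Auxiliary analytic lemmas -/

lemma log_sum_ineq {ι : Type*} [Fintype ι] (a b : ι → ℝ)
    (ha : ∀ j, 0 ≤ a j) (hab : ∀ j, a j ≤ b j) :
    ∑ j, (a j * Real.log (b j) - a j * Real.log (a j)) ≤
      (∑ j, a j) * Real.log (∑ j, b j) - (∑ j, a j) * Real.log (∑ j, a j) := by
  set P := ∑ j, a j with hPdef
  set M := ∑ j, b j with hMdef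
  have hP : 0 ≤ P := Finset.sum_nonneg fun j _ => ha j
  have hb : ∀ j, 0 ≤ b j := fun j => (ha j).trans (hab j)
  have hM : 0 ≤ M := Finset.sum_nonneg fun j _ => hb j
  have hPM : P ≤ M := Finset.sum_le_sum fun j _ => hab j
  rcases eq_or_lt_of_le hP with h0 | hP0
  · have hz : ∀ j ∈ Finset.univ, a j = 0 := by
      intro j hj
      have := Finset.sum_eq_zero_iff_of_nonneg (fun j _ => ha j) |>.mp h0.symm
      exact this j hj
    have : ∀ j ∈ (Finset.univ : Finset ι),
        a j * Real.log (b j) - a j * Real.log (a j) = 0 := by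
      intro j hj; rw [hz j hj]; ring
    rw [Finset.sum_congr rfl this, Finset.sum_const, ← h0]
    simp
  · have hM0 : 0 < M := lt_of_lt_of_le hP0 hPM
    have key : ∀ j, a j * Real.log (b j) - a j * Real.log (a j) ≤
        (P / M) * b j - a j + (a j * Real.log M - a j * Real.log P) := by
      intro j
      rcases eq_or_lt_of_le (ha j) with h0 | haj
      · rw [← h0]
        have : 0 ≤ P / M * b j := mul_nonneg (div_nonneg hP hM) (hb j)
        simpa using this
      · have hbj : 0 < b j := lt_of_lt_of_le haj (hab j)
        have hx : 0 < b j * P / (a j * M) := by positivity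
        have hlog := Real.log_le_sub_one_of_pos hx
        have heq : Real.log (b j * P / (a j * M)) =
            Real.log (b j) + Real.log P - (Real.log (a j) + Real.log M) := by
          rw [Real.log_div (by positivity) (by positivity),
            Real.log_mul (ne_of_gt hbj) (ne_of_gt hP0),
            Real.log_mul (ne_of_gt haj) (ne_of_gt hM0)]
        rw [heq] at hlog
        have h2 : a j * (Real.log (b j) + Real.log P - (Real.log (a j) + Real.log M))
            ≤ a j * (b j * P / (a j * M) - 1) :=
          mul_le_mul_of_nonneg_left hlog (le_of_lt haj)
        have h3 : a j * (b j * P / (a j * M) - 1) = P / M * b j - a j := by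
          field_simp
        nlinarith [h2, h3]
    calc ∑ j, (a j * Real.log (b j) - a j * Real.log (a j))
        ≤ ∑ j, ((P / M) * b j - a j + (a j * Real.log M - a j * Real.log P)) :=
          Finset.sum_le_sum fun j _ => key j
      _ = (P / M) * M - P + (P * Real.log M - P * Real.log P) := by
          rw [Finset.sum_add_distrib, Finset.sum_sub_distrib, ← Finset.mul_sum,
            Finset.sum_sub_distrib]
          simp only [← Finset.sum_mul, ← hPdef, ← hMdef]
      _ = P * Real.log M - P * Real.log P := by
          rw [div_mul_cancel₀ _ (ne_of_gt hM0)]; ring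

lemma max_ent {α : Type*} [Fintype α] (u : α → ℝ)
    (hu : ∀ a, 0 ≤ u a) (hsum : ∑ a, u a = 1) :
    ∑ a, -(u a * Real.log (u a)) ≤ Real.log (Fintype.card α) := by
  have hle : ∀ a, u a ≤ 1 := by
    intro a
    rw [← hsum]
    exact Finset.single_le_sum (fun j _ => hu j) (Finset.mem_univ a)
  have h := log_sum_ineq u (fun _ => 1) hu hle
  simp only [Real.log_one, mul_zero, zero_sub, hsum, one_mul,
    Finset.sum_const, Finset.card_univ, nsmul_eq_mul, mul_one] at h
  simpa using h

lemma cond_ent {α β ι : Type*} [Fintype α] [Fintype β] [Fintype ι]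
    (p : ι → ℝ) (q : ι → α → ℝ) (r : ι → β → ℝ)
    (hp : ∀ j, 0 ≤ p j) (hq : ∀ j a, 0 ≤ q j a) (hr : ∀ j b, 0 ≤ r j b)
    (hqs : ∀ j, ∑ a, q j a = 1) (hrs : ∀ j, ∑ b, r j b = 1) :
    (∑ b, -((∑ j, p j * r j b) * Real.log (∑ j, p j * r j b)))
      + ∑ j, p j * (∑ a, -(q j a * Real.log (q j a)))
    ≤ ∑ a, ∑ b, -((∑ j, p j * q j a * r j b) *
        Real.log (∑ j, p j * q j a * r j b)) := by
  have hqle : ∀ j a, q j a ≤ 1 := by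
    intro j a
    rw [← hqs j]
    exact Finset.single_le_sum (fun i _ => hq j i) (Finset.mem_univ a)
  have key : ∀ a b,
      ∑ j, (p j * q j a * r j b * Real.log (p j * r j b)
        - p j * q j a * r j b * Real.log (p j * q j a * r j b)) ≤
      (∑ j, p j * q j a * r j b) * Real.log (∑ j, p j * r j b)
        - (∑ j, p j * q j a * r j b) * Real.log (∑ j, p j * q j a * r j b) := by
    intro a b
    exact log_sum_ineq (fun j => p j * q j a * r j b) (fun j => p j * r j b)
      (fun j => mul_nonneg (mul_nonneg (hp j) (hq j a)) (hr j b))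
      (fun j => mul_le_mul_of_nonneg_right
        (mul_le_of_le_one_right (hp j) (hqle j a)) (hr j b))
  have id1 : ∀ (j : ι) (a : α) (b : β),
      p j * q j a * r j b * Real.log (p j * r j b)
        - p j * q j a * r j b * Real.log (p j * q j a * r j b)
      = p j * r j b * -(q j a * Real.log (q j a)) := by
    intro j a b
    rcases eq_or_lt_of_le (hp j) with h | h
    · rw [← h]; ring
    rcases eq_or_lt_of_le (hr j b) with h' | h'
    · rw [← h']; ring
    rcases eq_or_lt_of_le (hq j a) with h'' | h''
    · rw [← h'']; ring
    have : Real.log (p j * q j a * r j b)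
        = Real.log (p j * r j b) + Real.log (q j a) := by
      rw [show p j * q j a * r j b = p j * r j b * q j a by ring,
        Real.log_mul (by positivity) (ne_of_gt h'')]
    rw [this]; ring
  have idM : ∀ b, ∑ a, ∑ j, p j * q j a * r j b = ∑ j, p j * r j b := by
    intro b
    rw [Finset.sum_comm]
    refine Finset.sum_congr rfl fun j _ => ?_
    simp only [mul_right_comm _ _ (r j b)]
    rw [← Finset.mul_sum, hqs j, mul_one]
  have key2 : ∑ a, ∑ b, ∑ j, (p j * r j b * -(q j a * Real.log (q j a))) ≤
      ∑ a, ∑ b, ((∑ j, p j * q j a * r j b) * Real.log (∑ j, p j * r j b)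
        - (∑ j, p j * q j a * r j b) * Real.log (∑ j, p j * q j a * r j b)) := by
    refine Finset.sum_le_sum fun a _ => Finset.sum_le_sum fun b _ => ?_
    have := key a b
    simp only [id1] at this
    exact this
  have lhs_eq : ∑ a, ∑ b, ∑ j, (p j * r j b * -(q j a * Real.log (q j a)))
      = ∑ j, p j * (∑ a, -(q j a * Real.log (q j a))) := by
    calc ∑ a, ∑ b, ∑ j, (p j * r j b * -(q j a * Real.log (q j a)))
        = ∑ a, ∑ j, ∑ b, (p j * r j b * -(q j a * Real.log (q j a))) :=
          Finset.sum_congr rfl fun a _ => Finset.sum_comm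
      _ = ∑ j, ∑ a, ∑ b, (p j * r j b * -(q j a * Real.log (q j a))) :=
          Finset.sum_comm
      _ = ∑ j, p j * (∑ a, -(q j a * Real.log (q j a))) := by
          refine Finset.sum_congr rfl fun j _ => ?_
          rw [Finset.mul_sum]
          refine Finset.sum_congr rfl fun a _ => ?_
          rw [← Finset.sum_mul, ← Finset.mul_sum, hrs j, mul_one]
  have rhs_eq : ∑ a, ∑ b, ((∑ j, p j * q j a * r j b) * Real.log (∑ j, p j * r j b))
      = ∑ b, ((∑ j, p j * r j b) * Real.log (∑ j, p j * r j b)) := by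
    rw [Finset.sum_comm]
    refine Finset.sum_congr rfl fun b _ => ?_
    rw [← Finset.sum_mul, idM b]
  rw [lhs_eq] at key2
  have expand : ∑ a, ∑ b, ((∑ j, p j * q j a * r j b) * Real.log (∑ j, p j * r j b)
        - (∑ j, p j * q j a * r j b) * Real.log (∑ j, p j * q j a * r j b))
      = (∑ a, ∑ b, ((∑ j, p j * q j a * r j b) * Real.log (∑ j, p j * r j b)))
        - ∑ a, ∑ b, ((∑ j, p j * q j a * r j b) *
            Real.log (∑ j, p j * q j a * r j b)) := by
    rw [← Finset.sum_sub_distrib]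
    exact Finset.sum_congr rfl fun a _ => Finset.sum_sub_distrib _ _
  rw [expand, rhs_eq] at key2
  have neg1 : ∑ b, -((∑ j, p j * r j b) * Real.log (∑ j, p j * r j b))
      = -∑ b, ((∑ j, p j * r j b) * Real.log (∑ j, p j * r j b)) := by
    rw [← Finset.sum_neg_distrib]
  have neg2 : ∑ a, ∑ b, -((∑ j, p j * q j a * r j b) *
        Real.log (∑ j, p j * q j a * r j b))
      = -∑ a, ∑ b, ((∑ j, p j * q j a * r j b) *
        Real.log (∑ j, p j * q j a * r j b)) := by
    rw [← Finset.sum_neg_distrib]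
    exact Finset.sum_congr rfl fun a _ => by rw [← Finset.sum_neg_distrib]
  rw [neg1, neg2]
  linarith [key2]

lemma shannon_eq {α : Type*} [Fintype α] (u : α → ℝ) :
    shannon u = (∑ a, -(u a * Real.log (u a))) / Real.log 2 := by
  unfold shannon
  rw [Finset.sum_div]
  refine Finset.sum_congr rfl fun a _ => ?_
  rw [Real.logb]; ring

/-! ### Auxiliary quantum lemmas -/

lemma prob1_complex {d : ℕ} {σ : Matrix (Fin d) (Fin d) ℂ} (hσ : σ.PosSemidef)
    (B : Fin d → Fin d → ℂ) (i : Fin d) :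
    (∑ x, ∑ y, (starRingEnd ℂ) (B i x) * σ x y * B i y) = ((prob1 σ B i : ℝ) : ℂ) := by
  have h := hσ.dotProduct_mulVec_nonneg (B i)
  have heq : star (B i) ⬝ᵥ σ *ᵥ (B i)
      = ∑ x, ∑ y, (starRingEnd ℂ) (B i x) * σ x y * B i y := by
    simp only [dotProduct, Matrix.mulVec, Pi.star_apply, Finset.mul_sum]
    refine Finset.sum_congr rfl fun x _ => Finset.sum_congr rfl fun y _ => ?_
    simp [Complex.star_def]; ring
  rw [heq] at h
  rw [Complex.le_def] at h
  refine Complex.ext ?_ ?_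
  · simp [prob1]
  · simp [← h.2]

lemma prob1_nonneg {d : ℕ} {σ : Matrix (Fin d) (Fin d) ℂ} (hσ : σ.PosSemidef)
    (B : Fin d → Fin d → ℂ) (i : Fin d) : 0 ≤ prob1 σ B i := by
  have h := hσ.dotProduct_mulVec_nonneg (B i)
  have heq : star (B i) ⬝ᵥ σ *ᵥ (B i)
      = ∑ x, ∑ y, (starRingEnd ℂ) (B i x) * σ x y * B i y := by
    simp only [dotProduct, Matrix.mulVec, Pi.star_apply, Finset.mul_sum]
    refine Finset.sum_congr rfl fun x _ => Finset.sum_congr rfl fun y _ => ?_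
    simp [Complex.star_def]; ring
  rw [heq, Complex.le_def] at h
  simpa [prob1] using h.1

lemma ONB_complete {d : ℕ} {B : Fin d → Fin d → ℂ} (hB : IsONB B) (x y : Fin d) :
    (∑ i, (starRingEnd ℂ) (B i x) * B i y) = if x = y then 1 else 0 := by
  set U : Matrix (Fin d) (Fin d) ℂ := Matrix.of fun i x => B i x with hU
  have h1 : U * Uᴴ = 1 := by
    ext i j
    have h := congrArg (starRingEnd ℂ) (hB i j)
    simp only [map_sum, map_mul, RingHomCompTriple.comp_apply, RingHom.id_apply,
      starRingEnd_self_apply, apply_ite (starRingEnd ℂ), map_one, map_zero] at h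
    simp only [Matrix.mul_apply, Matrix.conjTranspose_apply, hU, Matrix.of_apply,
      Matrix.one_apply, Complex.star_def]
    exact h
  have h2 : Uᴴ * U = 1 := mul_eq_one_comm.mp h1
  have := congrFun (congrFun h2 x) y
  simp only [Matrix.mul_apply, Matrix.conjTranspose_apply, hU, Matrix.of_apply] at this
  rw [show (1 : Matrix (Fin d) (Fin d) ℂ) x y = if x = y then 1 else 0 from
    Matrix.one_apply] at this
  rw [← this]
  refine Finset.sum_congr rfl fun k _ => ?_
  simp [Complex.star_def]

lemma prob1_sum_one {d : ℕ} {σ : Matrix (Fin d) (Fin d) ℂ} (hσ : σ.trace = 1)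
    {B : Fin d → Fin d → ℂ} (hB : IsONB B) : ∑ i, prob1 σ B i = 1 := by
  have key : ∑ i, (∑ x, ∑ y, (starRingEnd ℂ) (B i x) * σ x y * B i y) = (1 : ℂ) := by
    rw [Finset.sum_comm]
    calc ∑ x, ∑ i, ∑ y, (starRingEnd ℂ) (B i x) * σ x y * B i y
        = ∑ x, ∑ y, ∑ i, (starRingEnd ℂ) (B i x) * σ x y * B i y :=
          Finset.sum_congr rfl fun x _ => Finset.sum_comm
      _ = ∑ x, ∑ y, σ x y * ∑ i, (starRingEnd ℂ) (B i x) * B i y := by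
          refine Finset.sum_congr rfl fun x _ => Finset.sum_congr rfl fun y _ => ?_
          rw [Finset.mul_sum]
          refine Finset.sum_congr rfl fun i _ => by ring
      _ = ∑ x, ∑ y, σ x y * (if x = y then 1 else 0) := by
          refine Finset.sum_congr rfl fun x _ => Finset.sum_congr rfl fun y _ => ?_
          rw [ONB_complete hB]
      _ = ∑ x, σ x x := by
          refine Finset.sum_congr rfl fun x _ => ?_
          simp [mul_ite, Finset.sum_ite_eq]
      _ = 1 := hσ
  have : (∑ i, (∑ x, ∑ y, (starRingEnd ℂ) (B i x) * σ x y * B i y)).re = 1 := by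
    rw [key]; simp
  rw [Complex.re_sum] at this
  exact this

lemma jointProb_sum_smul {n d J : ℕ} (p : Fin J → ℝ)
    (τ : Fin J → Matrix (Idx n d) (Idx n d) ℂ) (Bk : Fin n → Fin d → Fin d → ℂ)
    (i : Idx n d) :
    jointProb (∑ j, p j • τ j) Bk i = ∑ j, p j * jointProb (τ j) Bk i := by
  unfold jointProb
  have happ : ∀ x y : Idx n d, (∑ j, p j • τ j) x y = ∑ j, (p j : ℂ) * τ j x y := by
    intro x y
    simp [Matrix.sum_apply, Complex.real_smul]
  have key : (∑ x : Idx n d, ∑ y : Idx n d,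
      (∏ l, (starRingEnd ℂ) (Bk l (i l) (x l))) * (∑ j, p j • τ j) x y *
        (∏ l, Bk l (i l) (y l)))
      = ∑ j, (p j : ℂ) * (∑ x : Idx n d, ∑ y : Idx n d,
        (∏ l, (starRingEnd ℂ) (Bk l (i l) (x l))) * τ j x y * (∏ l, Bk l (i l) (y l))) := by
    have step : ∀ x y : Idx n d,
        (∏ l, (starRingEnd ℂ) (Bk l (i l) (x l))) * (∑ j, p j • τ j) x y *
          (∏ l, Bk l (i l) (y l))
        = ∑ j, (p j : ℂ) * ((∏ l, (starRingEnd ℂ) (Bk l (i l) (x l))) * τ j x y *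
            (∏ l, Bk l (i l) (y l))) := by
      intro x y
      rw [happ x y, Finset.mul_sum, Finset.sum_mul]
      exact Finset.sum_congr rfl fun j _ => by ring
    calc (∑ x : Idx n d, ∑ y : Idx n d,
        (∏ l, (starRingEnd ℂ) (Bk l (i l) (x l))) * (∑ j, p j • τ j) x y *
          (∏ l, Bk l (i l) (y l)))
        = ∑ x : Idx n d, ∑ y : Idx n d, ∑ j, (p j : ℂ) *
            ((∏ l, (starRingEnd ℂ) (Bk l (i l) (x l))) * τ j x y *
              (∏ l, Bk l (i l) (y l))) := by
          exact Finset.sum_congr rfl fun x _ => Finset.sum_congr rfl fun y _ => step x y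
      _ = ∑ x : Idx n d, ∑ j, ∑ y : Idx n d, (p j : ℂ) *
            ((∏ l, (starRingEnd ℂ) (Bk l (i l) (x l))) * τ j x y *
              (∏ l, Bk l (i l) (y l))) :=
          Finset.sum_congr rfl fun x _ => Finset.sum_comm
      _ = ∑ j, ∑ x : Idx n d, ∑ y : Idx n d, (p j : ℂ) *
            ((∏ l, (starRingEnd ℂ) (Bk l (i l) (x l))) * τ j x y *
              (∏ l, Bk l (i l) (y l))) := Finset.sum_comm
      _ = ∑ j, (p j : ℂ) * (∑ x : Idx n d, ∑ y : Idx n d,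
            (∏ l, (starRingEnd ℂ) (Bk l (i l) (x l))) * τ j x y *
              (∏ l, Bk l (i l) (y l))) := by
          refine Finset.sum_congr rfl fun j _ => ?_
          rw [Finset.mul_sum]
          exact Finset.sum_congr rfl fun x _ => by rw [Finset.mul_sum]
  rw [key, Complex.re_sum]
  refine Finset.sum_congr rfl fun j _ => ?_
  rw [Complex.re_ofReal_mul]

lemma sum_sum_prod {n d : ℕ} (f : Fin n → Fin d → Fin d → ℂ) :
    (∑ x : Idx n d, ∑ y : Idx n d, ∏ m, f m (x m) (y m))
      = ∏ m, ∑ u, ∑ v, f m u v := by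
  have h1 : ∀ m : Fin n, (∑ u, ∑ v, f m u v) = ∑ w : Fin d × Fin d, f m w.1 w.2 :=
    fun m => (Fintype.sum_prod_type' _).symm
  calc (∑ x : Idx n d, ∑ y : Idx n d, ∏ m, f m (x m) (y m))
      = ∑ z : Idx n d × Idx n d, ∏ m, f m (z.1 m) (z.2 m) :=
        (Fintype.sum_prod_type' _).symm
    _ = ∑ g : Fin n → Fin d × Fin d, ∏ m, f m ((g m).1) ((g m).2) := by
        refine Fintype.sum_equiv (Equiv.arrowProdEquivProdArrow (Fin n) (fun _ => Fin d) (fun _ => Fin d)).symm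
          _ _ fun z => ?_
        rfl
    _ = ∏ m, ∑ w : Fin d × Fin d, f m w.1 w.2 :=
        (Fintype.prod_sum (fun (m : Fin n) (w : Fin d × Fin d) => f m w.1 w.2)).symm
    _ = ∏ m, ∑ u, ∑ v, f m u v := by
        exact Finset.prod_congr rfl fun m _ => (h1 m).symm

lemma jointProb_tensorN {n d : ℕ} (A : Fin n → Matrix (Fin d) (Fin d) ℂ)
    (hA : ∀ m, (A m).PosSemidef) (Bk : Fin n → Fin d → Fin d → ℂ) (i : Idx n d) :
    jointProb (tensorN A) Bk i = ∏ m, prob1 (A m) (Bk m) (i m) := by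
  have hterm : ∀ x y : Idx n d,
      (∏ l, (starRingEnd ℂ) (Bk l (i l) (x l))) * tensorN A x y * (∏ l, Bk l (i l) (y l))
      = ∏ m, ((starRingEnd ℂ) (Bk m (i m) (x m)) * A m (x m) (y m) * Bk m (i m) (y m)) := by
    intro x y
    simp only [tensorN, Matrix.of_apply, ← Finset.prod_mul_distrib]
  have e1 : (∑ x : Idx n d, ∑ y : Idx n d,
      (∏ l, (starRingEnd ℂ) (Bk l (i l) (x l))) * tensorN A x y * (∏ l, Bk l (i l) (y l)))
      = ∑ x : Idx n d, ∑ y : Idx n d, ∏ m,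
          ((starRingEnd ℂ) (Bk m (i m) (x m)) * A m (x m) (y m) * Bk m (i m) (y m)) :=
    Finset.sum_congr rfl fun x _ => Finset.sum_congr rfl fun y _ => hterm x y
  have e2 := sum_sum_prod (fun m u v => (starRingEnd ℂ) (Bk m (i m) u) * A m u v * Bk m (i m) v)
  have e3 : (∏ m, ∑ u, ∑ v, (starRingEnd ℂ) (Bk m (i m) u) * A m u v * Bk m (i m) v)
      = ((∏ m, prob1 (A m) (Bk m) (i m) : ℝ) : ℂ) := by
    rw [Complex.ofReal_prod]
    exact Finset.prod_congr rfl fun m _ => prob1_complex (hA m) (Bk m) (i m)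
  have := congrArg Complex.re ((e1.trans e2).trans e3)
  exact this.trans (Complex.ofReal_re _)

/-! ### Splitting a subsystem off -/

lemma insertAt_self {n d : ℕ} (l : Fin n) (i : Fin d) (g : {m : Fin n // m ≠ l} → Fin d) :
    insertAt l i g l = i := by simp [insertAt]

lemma insertAt_ne {n d : ℕ} (l : Fin n) (i : Fin d) (g : {m : Fin n // m ≠ l} → Fin d)
    (m : {m : Fin n // m ≠ l}) : insertAt l i g m.1 = g m := by
  simp [insertAt, m.2]

def splitEquiv {n d : ℕ} (l : Fin n) : Idx n d ≃ Fin d × ({m : Fin n // m ≠ l} → Fin d) where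
  toFun x := (x l, fun m => x m.1)
  invFun z := insertAt l z.1 z.2
  left_inv x := by
    funext m
    by_cases h : m = l
    · subst h; simp [insertAt]
    · simp [insertAt, h]
  right_inv z := by
    refine Prod.ext (insertAt_self _ _ _) ?_
    funext m
    exact insertAt_ne _ _ _ m

lemma sum_split {n d : ℕ} (l : Fin n) (F : Idx n d → ℝ) :
    ∑ x : Idx n d, F x = ∑ i : Fin d, ∑ g : {m : Fin n // m ≠ l} → Fin d,
      F (insertAt l i g) := by
  calc ∑ x : Idx n d, F x
      = ∑ z : Fin d × ({m : Fin n // m ≠ l} → Fin d), F (insertAt l z.1 z.2) :=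
        Fintype.sum_equiv (splitEquiv l) _ _
          (fun x => congrArg F ((splitEquiv l).left_inv x).symm)
    _ = ∑ i : Fin d, ∑ g : {m : Fin n // m ≠ l} → Fin d, F (insertAt l i g) :=
        Fintype.sum_prod_type' (fun i g => F (insertAt l i g))

lemma shannon_split {n d : ℕ} (l : Fin n) (p : Idx n d → ℝ) :
    shannon p = ∑ i : Fin d, ∑ g : {m : Fin n // m ≠ l} → Fin d,
      -(p (insertAt l i g) * Real.logb 2 (p (insertAt l i g))) :=
  sum_split l _

lemma margAt_eq {n d : ℕ} (l : Fin n) (p : Idx n d → ℝ) (i : Fin d) :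
    margAt p l i = ∑ g : {m : Fin n // m ≠ l} → Fin d, p (insertAt l i g) := by
  unfold margAt
  rw [sum_split l (fun x => if x l = i then p x else 0)]
  rw [Finset.sum_comm]
  have : ∀ g : {m : Fin n // m ≠ l} → Fin d,
      (∑ i' : Fin d, if insertAt l i' g l = i then p (insertAt l i' g) else 0)
      = p (insertAt l i g) := by
    intro g
    have : ∀ i' : Fin d, (if insertAt l i' g l = i then p (insertAt l i' g) else 0)
        = if i' = i then p (insertAt l i' g) else 0 := by
      intro i'; rw [insertAt_self]
    rw [Finset.sum_congr rfl fun i' _ => this i']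
    simp
  rw [Finset.sum_congr rfl fun g _ => this g]

lemma prod_split {n : ℕ} (l : Fin n) (F : Fin n → ℝ) :
    ∏ m, F m = F l * ∏ m : {m : Fin n // m ≠ l}, F m.1 := by
  rw [← Finset.mul_prod_erase Finset.univ F (Finset.mem_univ l)]
  congr 1
  exact Finset.prod_subtype _ (fun x => by simp) _

lemma sum_prod_subtype {n d : ℕ} (l : Fin n) (h : {m : Fin n // m ≠ l} → Fin d → ℝ) :
    ∑ g : {m : Fin n // m ≠ l} → Fin d, ∏ m, h m (g m) = ∏ m, ∑ u, h m u :=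
  (Fintype.prod_sum h).symm

end AuxLemmas

/-- For every fully separable state and every choice of `N` MUBs per subsystem, the total
mutual information between any subsystem and the rest is at most `N log₂ d − f`. -/
theorem fully_separable_mutual_info_bound
    (n d N : ℕ) (f : ℝ) (hf : EntropicBound d N f)
    (ρ : Matrix (Idx n d) (Idx n d) ℂ) (hρ : IsDensityOp ρ) (hsep : FullySep ρ)
    (B : Fin N → Fin n → Fin d → Fin d → ℂ) (hB : ValidMUBs N B) :
    ∀ l : Fin n, ∑ k, mutualInfo (jointProb ρ (B k)) l ≤ N * Real.logb 2 d - f := by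
  intro l
  obtain ⟨J, p, σ, hp0, hp1, hden, hρeq⟩ := hsep
  have hL2 : (0:ℝ) < Real.log 2 := Real.log_pos one_lt_two
  have main_k : ∀ k, mutualInfo (jointProb ρ (B k)) l ≤
      Real.logb 2 d - ∑ j, p j * shannon (prob1 (σ j l) (B k l)) := by
    intro k
    set q : Fin J → Fin d → ℝ := fun j i => prob1 (σ j l) (B k l) i with hqdef
    set r : Fin J → ({m : Fin n // m ≠ l} → Fin d) → ℝ :=
      fun j g => ∏ m : {m : Fin n // m ≠ l}, prob1 (σ j m.1) (B k m.1) (g m) with hrdef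
    have hq0 : ∀ j i, 0 ≤ q j i := fun j i => prob1_nonneg (hden j l).1 _ i
    have hq1 : ∀ j, ∑ i, q j i = 1 := fun j => prob1_sum_one (hden j l).2 (hB.1 k l)
    have hr0 : ∀ j g, 0 ≤ r j g := fun j g =>
      Finset.prod_nonneg fun m _ => prob1_nonneg (hden j m.1).1 _ _
    have hr1 : ∀ j, ∑ g, r j g = 1 := by
      intro j
      rw [hrdef]
      rw [sum_prod_subtype l (fun m u => prob1 (σ j m.1) (B k m.1) u)]
      exact Finset.prod_eq_one fun m _ => prob1_sum_one (hden j m.1).2 (hB.1 k m.1)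
    have hdec : ∀ (i : Fin d) (g : {m : Fin n // m ≠ l} → Fin d),
        jointProb ρ (B k) (insertAt l i g) = ∑ j, p j * q j i * r j g := by
      intro i g
      rw [hρeq, jointProb_sum_smul]
      refine Finset.sum_congr rfl fun j _ => ?_
      rw [jointProb_tensorN (σ j) (fun m => (hden j m).1)]
      rw [prod_split l (fun m => prob1 (σ j m) (B k m) (insertAt l i g m))]
      rw [show (∏ m : {m : Fin n // m ≠ l}, prob1 (σ j m.1) (B k m.1) (insertAt l i g m.1))
          = r j g from Finset.prod_congr rfl fun m _ => by rw [insertAt_ne]]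
      rw [insertAt_self]
      rw [hqdef]
      ring
    have hmargAt : ∀ i, margAt (jointProb ρ (B k)) l i = ∑ j, p j * q j i := by
      intro i
      rw [margAt_eq, Finset.sum_congr rfl fun g _ => hdec i g, Finset.sum_comm]
      refine Finset.sum_congr rfl fun j _ => ?_
      rw [← Finset.mul_sum, hr1 j, mul_one]
    have hmargRest : ∀ g, margRest (jointProb ρ (B k)) l g = ∑ j, p j * r j g := by
      intro g
      unfold margRest
      rw [Finset.sum_congr rfl fun i _ => hdec i g, Finset.sum_comm]
      refine Finset.sum_congr rfl fun j _ => ?_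
      simp only [mul_right_comm _ _ (r j g)]
      rw [← Finset.mul_sum, hq1 j, mul_one]
    have HJ_eq : shannon (jointProb ρ (B k)) =
        (∑ i : Fin d, ∑ g : {m : Fin n // m ≠ l} → Fin d,
          -((∑ j, p j * q j i * r j g) * Real.log (∑ j, p j * q j i * r j g)))
          / Real.log 2 := by
      rw [shannon_split l, Finset.sum_div]
      refine Finset.sum_congr rfl fun i _ => ?_
      rw [Finset.sum_div]
      refine Finset.sum_congr rfl fun g _ => ?_
      rw [hdec i g, Real.logb]; ring
    have HR_eq : shannon (margRest (jointProb ρ (B k)) l) =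
        (∑ g : {m : Fin n // m ≠ l} → Fin d,
          -((∑ j, p j * r j g) * Real.log (∑ j, p j * r j g))) / Real.log 2 := by
      unfold shannon
      rw [Finset.sum_div]
      refine Finset.sum_congr rfl fun g _ => ?_
      rw [hmargRest g, Real.logb]; ring
    have HA_le : shannon (margAt (jointProb ρ (B k)) l) ≤ Real.logb 2 d := by
      have hnn : ∀ i, 0 ≤ margAt (jointProb ρ (B k)) l i := by
        intro i; rw [hmargAt i]
        exact Finset.sum_nonneg fun j _ => mul_nonneg (hp0 j) (hq0 j i)
      have hsum : ∑ i, margAt (jointProb ρ (B k)) l i = 1 := by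
        rw [Finset.sum_congr rfl fun i _ => hmargAt i, Finset.sum_comm]
        calc ∑ j, ∑ i, p j * q j i = ∑ j, p j := by
              refine Finset.sum_congr rfl fun j _ => ?_
              rw [← Finset.mul_sum, hq1 j, mul_one]
          _ = 1 := hp1
      have h := max_ent _ hnn hsum
      have hcard : Real.log (Fintype.card (Fin d)) = Real.log d := by simp
      rw [hcard] at h
      rw [shannon_eq, Real.logb]
      exact div_le_div_of_nonneg_right h hL2.le |>.trans_eq rfl
    have cond := cond_ent p q r hp0 hq0 hr0 hq1 hr1
    have hdiv : (∑ g : {m : Fin n // m ≠ l} → Fin d,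
          -((∑ j, p j * r j g) * Real.log (∑ j, p j * r j g))) / Real.log 2
        + (∑ j, p j * (∑ i, -(q j i * Real.log (q j i)))) / Real.log 2
        ≤ (∑ i : Fin d, ∑ g : {m : Fin n // m ≠ l} → Fin d,
          -((∑ j, p j * q j i * r j g) * Real.log (∑ j, p j * q j i * r j g)))
          / Real.log 2 := by
      rw [← add_div]
      exact div_le_div_of_nonneg_right cond hL2.le
    have hQsum : ∑ j, p j * shannon (prob1 (σ j l) (B k l))
        = (∑ j, p j * (∑ i, -(q j i * Real.log (q j i)))) / Real.log 2 := by
      rw [Finset.sum_div]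
      refine Finset.sum_congr rfl fun j _ => ?_
      rw [show shannon (prob1 (σ j l) (B k l)) = shannon (q j) from rfl, shannon_eq]
      ring
    unfold mutualInfo
    rw [HJ_eq, HR_eq, hQsum]
    linarith [HA_le, hdiv]
  calc ∑ k, mutualInfo (jointProb ρ (B k)) l
      ≤ ∑ k, (Real.logb 2 d - ∑ j, p j * shannon (prob1 (σ j l) (B k l))) :=
        Finset.sum_le_sum fun k _ => main_k k
    _ = N * Real.logb 2 d - ∑ j, p j * ∑ k, shannon (prob1 (σ j l) (B k l)) := by
        rw [Finset.sum_sub_distrib, Finset.sum_const, Finset.card_univ, Fintype.card_fin,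
          nsmul_eq_mul]
        congr 1
        rw [Finset.sum_comm]
        exact Finset.sum_congr rfl fun j _ => (Finset.mul_sum _ _ _).symm
    _ ≤ N * Real.logb 2 d - f := by
        have hbound : f ≤ ∑ j, p j * ∑ k, shannon (prob1 (σ j l) (B k l)) := by
          calc f = ∑ j, p j * f := by rw [← Finset.sum_mul, hp1, one_mul]
            _ ≤ _ := Finset.sum_le_sum fun j _ => mul_le_mul_of_nonneg_left
                (hf (fun k => B k l) (fun k => hB.1 k l) (fun k k' h => hB.2 l k k' h)
                  (σ j l) (hden j l)) (hp0 j)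
        linarith

end
end Paper
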